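/- arXiv:2011.05611 — 6 statements merged into one kernel-verified Lean document; each statement's English description precedes it below -/
import Mathlib

section
/- For the Bakhvalov-type mesh, the first step size satisfies c·εN^{-1} ≤ h_0 ≤ C·εN^{-1} for positive constants c, C depending only on σ and β (not on ε or N). -/
/-- For the Bakhvalov-type mesh, the first step size
`h_0 = x_1 - x_0 = (σε/β)·(-ln(1 - 2(1-ε)/N))` satisfies
`c·ε/N ≤ h_0 ≤ C·ε/N` with constants `c, C > 0` depending only on `σ` and `β`. -/
theorem stmt2 (σ β : ℝ) (hσ : 0 < σ) (hβ : 0 < β) :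
    ∃ c C : ℝ, 0 < c ∧ 0 < C ∧
      ∀ (N : ℕ) (ε : ℝ), 4 ≤ N → Even N → 0 < ε → ε ≤ 1/(N:ℝ) →
        c * ε / (N:ℝ) ≤ σ*ε/β * (-Real.log (1 - 2*(1-ε)*(1/(N:ℝ)))) ∧
        σ*ε/β * (-Real.log (1 - 2*(1-ε)*(1/(N:ℝ)))) ≤ C * ε / (N:ℝ) := by
  refine ⟨3*σ/(2*β), 4*σ/β, by positivity, by positivity, ?_⟩
  intro N ε hN _ hε hεN
  have hN4 : (4:ℝ) ≤ N := by exact_mod_cast hN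
  have hN0 : (0:ℝ) < N := by linarith
  have hε4 : ε ≤ 1/4 := by
    have : (1:ℝ)/N ≤ 1/4 := by
      apply div_le_div_of_nonneg_left <;> linarith
    linarith
  set t := 2*(1-ε)*(1/(N:ℝ)) with ht
  have ht1 : 3/(2*(N:ℝ)) ≤ t := by
    rw [ht, div_le_iff₀ (by positivity : (0:ℝ) < 2*(N:ℝ))]
    have h34 : (3:ℝ)/4 ≤ 1 - ε := by linarith
    have heq : 2*(1-ε)*(1/(N:ℝ))*(2*(N:ℝ)) = 4*(1-ε) := by field_simp; ring
    rw [heq]; linarith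
  have ht2 : t ≤ 2/N := by
    rw [ht]
    have h1 : 1 - ε ≤ 1 := by linarith
    have : (0:ℝ) < 1/N := by positivity
    calc 2*(1-ε)*(1/N) ≤ 2*1*(1/N) := by nlinarith
      _ = 2/N := by ring
  have ht3 : t ≤ 1/2 := by
    have : (2:ℝ)/N ≤ 1/2 := by
      rw [div_le_div_iff₀ hN0 (by norm_num)]; linarith
    linarith
  have ht0 : 0 < t := by
    have : 0 < 3/(2*(N:ℝ)) := by positivity
    linarith
  have hpos : 0 < 1 - t := by linarith
  have hlow : t ≤ -Real.log (1 - t) := by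
    have := Real.log_le_sub_one_of_pos hpos
    linarith
  have hup : -Real.log (1 - t) ≤ 2*t := by
    have h1 : Real.log (1-t)⁻¹ ≤ (1-t)⁻¹ - 1 := Real.log_le_sub_one_of_pos (by positivity)
    rw [Real.log_inv] at h1
    have h2 : (1-t)⁻¹ - 1 = t/(1-t) := by field_simp; ring
    have h3 : t/(1-t) ≤ 2*t := by
      rw [div_le_iff₀ hpos]; nlinarith
    linarith
  have hσεβ : 0 ≤ σ*ε/β := by positivity
  constructor
  · have heq : 3*σ/(2*β) * ε / N = σ*ε/β * (3/(2*N)) := by field_simp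
    rw [heq]
    apply mul_le_mul_of_nonneg_left _ hσεβ
    linarith
  · have heq : 4*σ/β * ε / N = σ*ε/β * (4/N) := by field_simp
    rw [heq]
    apply mul_le_mul_of_nonneg_left _ hσεβ
    have h4 : (2:ℝ)*(2/(N:ℝ)) = 4/(N:ℝ) := by ring
    have : 2*t ≤ 4/(N:ℝ) := by linarith
    linarith
end

section
/- For the Bakhvalov-type mesh, the step size h_{N/2-2} = x_{N/2-1} - x_{N/2-2} satisfies (1/4)·σε ≤ h_{N/2-2} ≤ σε. -/
/-- For the Bakhvalov-type mesh (with `β = 1` absorbed into `σ`), the step size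
`h_{N/2-2} = x_{N/2-1} - x_{N/2-2}` satisfies `(1/4)σε ≤ h_{N/2-2} ≤ σε`. -/
theorem stmt3 (N : ℕ) (hN : 4 ≤ N) (hNe : Even N) (ε σ : ℝ)
    (hε0 : 0 < ε) (hε : ε ≤ 1/(N:ℝ)) (hσ : 0 < σ)
    (x : ℕ → ℝ)
    (hx : ∀ i ≤ N/2, x i = σ*ε * (-Real.log (1 - 2*(1-ε)*((i:ℝ)/(N:ℝ))))) :
    (1/4) * σ * ε ≤ x (N/2 - 1) - x (N/2 - 2) ∧
    x (N/2 - 1) - x (N/2 - 2) ≤ σ * ε := by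
  obtain ⟨k, hk⟩ := hNe
  subst hk
  have hk2 : 2 ≤ k := by omega
  have hkR : (2:ℝ) ≤ (k:ℝ) := by exact_mod_cast hk2
  have hk0 : (0:ℝ) < (k:ℝ) := by linarith
  have hNdiv : (k+k)/2 = k := by omega
  have hNR : ((k+k:ℕ):ℝ) = 2*(k:ℝ) := by push_cast; ring
  have hε4 : ε ≤ 1/4 := by
    refine le_trans hε ?_
    rw [hNR, div_le_div_iff₀ (by linarith) (by norm_num)]
    linarith
  have hεk : ε * (2*(k:ℝ)) ≤ 1 := by
    have := hε
    rw [hNR, le_div_iff₀ (by linarith)] at this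
    linarith
  have h1ε : 0 < 1 - ε := by linarith
  set A : ℝ := ε + 2*(1-ε)/k with hA
  set B : ℝ := ε + (1-ε)/k with hB
  have hBpos : 0 < B := by
    have : 0 < (1-ε)/k := div_pos h1ε hk0
    rw [hB]; linarith
  have hApos : 0 < A := by
    have : 0 < 2*(1-ε)/k := by positivity
    rw [hA]; linarith
  have c1 : ((k-1:ℕ):ℝ) = (k:ℝ) - 1 := by
    have : (1:ℕ) ≤ k := by omega
    push_cast [Nat.cast_sub this]; ring
  have c2 : ((k-2:ℕ):ℝ) = (k:ℝ) - 2 := by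
    push_cast [Nat.cast_sub hk2]; ring
  have e1 : 1 - 2*(1-ε)*(((k-1:ℕ):ℝ)/((k+k:ℕ):ℝ)) = B := by
    rw [c1, hNR, hB]
    field_simp
    ring
  have e2 : 1 - 2*(1-ε)*(((k-2:ℕ):ℝ)/((k+k:ℕ):ℝ)) = A := by
    rw [c2, hNR, hA]
    field_simp
    ring
  have h1 : x ((k+k)/2 - 1) = σ*ε*(-Real.log B) := by
    rw [hNdiv, hx (k-1) (by omega), e1]
  have h2 : x ((k+k)/2 - 2) = σ*ε*(-Real.log A) := by
    rw [hNdiv, hx (k-2) (by omega), e2]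
  have hdiff : x ((k+k)/2 - 1) - x ((k+k)/2 - 2) = σ*ε*Real.log (A/B) := by
    rw [h1, h2, Real.log_div hApos.ne' hBpos.ne']
    ring
  have hratio_pos : 0 < A/B := div_pos hApos hBpos
  -- upper bound on ratio: A/B ≤ 2
  have hub : A/B ≤ 2 := by
    rw [div_le_iff₀ hBpos, hA, hB]
    have h0 : 0 < (1-ε)/(k:ℝ) := div_pos h1ε hk0
    have h2 : 2*(1-ε)/(k:ℝ) = 2*((1-ε)/(k:ℝ)) := by ring
    linarith
  -- lower bound on ratio: 8/5 ≤ A/B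
  have key : 0 ≤ 2*(1-ε) - 3*ε*(k:ℝ) := by nlinarith
  have hdiffAB : A - 8/5*B = (2*(1-ε) - 3*ε*(k:ℝ))/(5*(k:ℝ)) := by
    rw [hA, hB]; field_simp; ring
  have hlb : 8/5 ≤ A/B := by
    rw [le_div_iff₀ hBpos]
    have h5 : 0 ≤ (2*(1-ε) - 3*ε*(k:ℝ))/(5*(k:ℝ)) :=
      div_nonneg key (by linarith)
    linarith [hdiffAB ▸ h5]
  -- exp(1/4) ≤ 8/5
  have hexp : Real.exp (1/4) < 8/5 := by
    have hpow : Real.exp (1/4) ^ 4 = Real.exp 1 := by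
      rw [← Real.exp_nat_mul]; norm_num
    have h1lt : Real.exp 1 < (8/5:ℝ)^4 := by
      have := Real.exp_one_lt_d9
      norm_num at this ⊢
      linarith
    refine lt_of_pow_lt_pow_left₀ 4 (by norm_num) ?_
    rw [hpow]; exact h1lt
  have hloglb : 1/4 ≤ Real.log (A/B) := by
    rw [Real.le_log_iff_exp_le hratio_pos]
    linarith
  have hlogub : Real.log (A/B) ≤ 1 := by
    have h2e : (A/B) ≤ Real.exp 1 := by
      have := Real.exp_one_gt_d9
      linarith
    calc Real.log (A/B) ≤ Real.log (Real.exp 1) :=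
          Real.log_le_log hratio_pos h2e
      _ = 1 := Real.log_exp 1
  have hσε : 0 < σ * ε := mul_pos hσ hε0
  constructor
  · rw [hdiff]
    have := mul_le_mul_of_nonneg_left hloglb hσε.le
    linarith
  · rw [hdiff]
    have := mul_le_mul_of_nonneg_left hlogub hσε.le
    linarith
end

section
/- For the Bakhvalov-type mesh, the transition step size h_{N/2-1} = x_{N/2} - x_{N/2-1} satisfies (1/2)·σε ≤ h_{N/2-1} ≤ 2σ·N^{-1}, and moreover h_{N/2-1} = (σε/β)·ln((ε + 2(1-ε)/N)/ε). -/
/-- For the Bakhvalov-type mesh, the transition step size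
`h_{N/2-1} = x_{N/2} - x_{N/2-1}` equals `(σε/β)·ln((ε + 2(1-ε)/N)/ε)`, and
(for `β = 1`) satisfies `(1/2)σε ≤ h_{N/2-1} ≤ 2σ/N`. -/
theorem stmt4 (N : ℕ) (hN : 4 ≤ N) (hNe : Even N) (ε σ β : ℝ)
    (hε0 : 0 < ε) (hε : ε ≤ 1/(N:ℝ)) (hσ : 0 < σ) (hβ : 0 < β)
    (x : ℕ → ℝ)
    (hx : ∀ i ≤ N/2, x i = σ*ε/β * (-Real.log (1 - 2*(1-ε)*((i:ℝ)/(N:ℝ))))) :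
    x (N/2) - x (N/2 - 1) = σ*ε/β * Real.log ((ε + 2*(1-ε)/(N:ℝ))/ε) ∧
    (β = 1 →
      (1/2) * σ * ε ≤ x (N/2) - x (N/2 - 1) ∧
      x (N/2) - x (N/2 - 1) ≤ 2 * σ / (N:ℝ)) := by
  obtain ⟨k, hk⟩ := hNe
  have hk2 : N = 2 * k := by omega
  have hk4 : 2 ≤ k := by omega
  have hNd : N / 2 = k := by omega
  have hkR : (2:ℝ) ≤ (k:ℝ) := by exact_mod_cast hk4
  have hNR : (N:ℝ) = 2 * (k:ℝ) := by exact_mod_cast hk2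
  have hNpos : (0:ℝ) < (N:ℝ) := by
    have : (4:ℝ) ≤ (N:ℝ) := by exact_mod_cast hN
    linarith
  have hN4 : (4:ℝ) ≤ (N:ℝ) := by exact_mod_cast hN
  have hε4 : ε ≤ 1/4 := by
    have h1 : 1/(N:ℝ) ≤ 1/4 := by
      apply one_div_le_one_div_of_le <;> linarith
    linarith
  have hεN : ε * (N:ℝ) ≤ 1 := by
    have := (le_div_iff₀ hNpos).mp hε
    linarith
  set A : ℝ := ε + 2*(1-ε)/(N:ℝ) with hA
  have hApos : 0 < A := by
    have h1 : (0:ℝ) < 1 - ε := by linarith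
    have : 0 < 2*(1-ε)/(N:ℝ) := by positivity
    simp only [hA]
    linarith
  have hkpos : (0:ℝ) < (k:ℝ) := by linarith
  -- value at N/2
  have hxk : x (N/2) = σ*ε/β * (-Real.log ε) := by
    rw [hx (N/2) le_rfl, hNd]
    have hk0 : (k:ℝ) ≠ 0 := ne_of_gt hkpos
    have harg : 1 - 2*(1-ε)*((k:ℝ)/(N:ℝ)) = ε := by
      rw [hNR]; field_simp; ring
    rw [harg]
  have hxk1 : x (N/2 - 1) = σ*ε/β * (-Real.log A) := by
    rw [hx (N/2 - 1) (by omega)]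
    have : ((N/2 - 1 : ℕ) : ℝ) = (k:ℝ) - 1 := by
      rw [hNd]
      have : (1:ℕ) ≤ k := by omega
      push_cast [Nat.cast_sub this]
      ring
    rw [this]
    have hk0 : (k:ℝ) ≠ 0 := ne_of_gt hkpos
    have harg : 1 - 2*(1-ε)*(((k:ℝ)-1)/(N:ℝ)) = A := by
      rw [hA, hNR]; field_simp; ring
    rw [harg]
  have hdiff : x (N/2) - x (N/2 - 1) = σ*ε/β * Real.log (A/ε) := by
    rw [hxk, hxk1, Real.log_div (ne_of_gt hApos) (ne_of_gt hε0)]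
    ring
  refine ⟨hdiff, fun hβ1 => ?_⟩
  rw [hdiff, hβ1]
  have hAlb : (5:ℝ)/2 ≤ A/ε := by
    rw [le_div_iff₀ hε0, hA]
    have h3 : (3:ℝ)/2*ε ≤ 2*(1-ε)/(N:ℝ) := by
      rw [le_div_iff₀ hNpos]; nlinarith [hεN, hε4]
    linarith
  have hAub : A/ε ≤ 1 + 2/((N:ℝ)*ε) := by
    rw [div_le_iff₀ hε0]
    have h1 : 2*(1-ε)/(N:ℝ) ≤ 2/(N:ℝ) := by
      rw [div_le_div_iff₀ hNpos hNpos]; nlinarith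
    have h2 : (1 + 2/((N:ℝ)*ε)) * ε = ε + 2/(N:ℝ) := by
      field_simp
    rw [h2, hA]
    linarith
  have hlogl : (1:ℝ)/2 ≤ Real.log (A/ε) := by
    rw [Real.le_log_iff_exp_le (by linarith)]
    have hsq : Real.exp (1/2) ^ 2 = Real.exp 1 := by
      rw [sq, ← Real.exp_add]; norm_num
    have he := Real.exp_one_lt_d9
    nlinarith [Real.exp_pos (1/2 : ℝ), hAlb]
  have hlogu : Real.log (A/ε) ≤ 2/((N:ℝ)*ε) := by
    have := Real.log_le_sub_one_of_pos (show 0 < A/ε by linarith)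
    linarith
  constructor
  · have : σ*ε/1 * (1/2) ≤ σ*ε/1 * Real.log (A/ε) := by
      apply mul_le_mul_of_nonneg_left hlogl (by positivity)
    linarith
  · have h1 : σ*ε/1 * Real.log (A/ε) ≤ σ*ε/1 * (2/((N:ℝ)*ε)) := by
      apply mul_le_mul_of_nonneg_left hlogu (by positivity)
    have h2 : σ*ε/1 * (2/((N:ℝ)*ε)) = 2*σ/(N:ℝ) := by
      field_simp
    linarith
end

section
/- For the Bakhvalov-type mesh, x_{N/2-1} ≥ c·σε·ln N and x_{N/2} = (σε/β)·ln(1/ε) ≥ c·σε·|ln ε| for some constant c > 0 independent of ε and N. -/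
lemma stmt5_aux (σ β c : ℝ) (hσ : 0 < σ) (hβ : 0 < β) (hcpos : 0 < c)
    (hβc : β * c = 1 - Real.log 3 / Real.log 4) :
      ∀ (N : ℕ) (ε : ℝ) (x : ℕ → ℝ), 4 ≤ N → Even N → 0 < ε → ε ≤ 1/(N:ℝ) →
        (∀ i ≤ N/2, x i = σ*ε/β * (-Real.log (1 - 2*(1-ε)*((i:ℝ)/(N:ℝ))))) →
        c * σ * ε * Real.log N ≤ x (N/2 - 1) ∧
        x (N/2) = σ*ε/β * Real.log (1/ε) ∧
        c * σ * ε * |Real.log ε| ≤ x (N/2) := by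
  have hL4 : (0:ℝ) < Real.log 4 := Real.log_pos (by norm_num)
  have hL3 : (0:ℝ) < Real.log 3 := Real.log_pos (by norm_num)
  have hL34 : Real.log 3 < Real.log 4 := Real.log_lt_log (by norm_num) (by norm_num)
  have hcβ1 : c * β ≤ 1 := by
    rw [mul_comm c β, hβc]
    have : 0 ≤ Real.log 3 / Real.log 4 := by positivity
    linarith
  intro N ε x hN hEven hε hεN h
  have hN0 : (0:ℝ) < (N:ℝ) := by positivity
  have hNR : (4:ℝ) ≤ (N:ℝ) := by exact_mod_cast hN
  have hε1 : ε < 1 := lt_of_le_of_lt hεN (by rw [div_lt_one hN0]; linarith)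
  have hεN1 : ε * (N:ℝ) ≤ 1 := by
    have := mul_le_mul_of_nonneg_right hεN hN0.le
    rw [div_mul_cancel₀ 1 hN0.ne'] at this
    exact this
  obtain ⟨m, hm⟩ := hEven
  have hm2 : N / 2 = m := by omega
  have hcast : ((N / 2 : ℕ) : ℝ) = (N:ℝ) / 2 := by
    rw [hm2]; subst hm; push_cast; ring
  have hcast1 : ((N / 2 - 1 : ℕ) : ℝ) = (N:ℝ) / 2 - 1 := by
    have he : N / 2 - 1 = m - 1 := by omega
    rw [he]; subst hm
    have hm1 : 1 ≤ m := by omega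
    push_cast [hm1]; ring
  -- x (N/2)
  have hin2 : 1 - 2*(1-ε)*(((N:ℝ)/2)/(N:ℝ)) = ε := by
    field_simp; ring
  have hx2 : x (N/2) = σ*ε/β * (-Real.log ε) := by
    rw [h (N/2) le_rfl, hcast, hin2]
  have hlogε : Real.log (1/ε) = -Real.log ε := by
    rw [one_div, Real.log_inv]
  have habs : |Real.log ε| = -Real.log ε :=
    abs_of_nonpos (Real.log_nonpos hε.le hε1.le)
  have hnlε : 0 ≤ -Real.log ε := by
    have := Real.log_nonpos hε.le hε1.le; linarith
  -- x (N/2 - 1)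
  have hin1 : 1 - 2*(1-ε)*(((N:ℝ)/2 - 1)/(N:ℝ)) = (ε*(N:ℝ) + 2*(1-ε))/(N:ℝ) := by
    field_simp; ring
  have hx1 : x (N/2 - 1) = σ*ε/β * (-Real.log ((ε*(N:ℝ) + 2*(1-ε))/(N:ℝ))) := by
    rw [h (N/2 - 1) (by omega), hcast1, hin1]
  have hDpos : (0:ℝ) < (ε*(N:ℝ) + 2*(1-ε))/(N:ℝ) := by
    apply div_pos _ hN0; nlinarith
  have hDle : (ε*(N:ℝ) + 2*(1-ε))/(N:ℝ) ≤ 3/(N:ℝ) := by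
    gcongr; nlinarith
  have hlogD : Real.log ((ε*(N:ℝ) + 2*(1-ε))/(N:ℝ)) ≤ Real.log 3 - Real.log (N:ℝ) := by
    calc Real.log ((ε*(N:ℝ) + 2*(1-ε))/(N:ℝ)) ≤ Real.log (3/(N:ℝ)) :=
          Real.log_le_log hDpos hDle
      _ = Real.log 3 - Real.log (N:ℝ) := Real.log_div (by norm_num) hN0.ne'
  have hlogN4 : Real.log 4 ≤ Real.log (N:ℝ) := Real.log_le_log (by norm_num) hNR
  have hlogN0 : 0 ≤ Real.log (N:ℝ) := by linarith
  -- key scalar inequality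
  have hkey : β * c * Real.log (N:ℝ) ≤ Real.log (N:ℝ) - Real.log 3 := by
    have h1 := mul_le_mul_of_nonneg_left hlogN4 (div_nonneg hL3.le hL4.le)
    have h2 : Real.log 3 / Real.log 4 * Real.log 4 = Real.log 3 :=
      div_mul_cancel₀ _ hL4.ne'
    have h3 : β * c * Real.log (N:ℝ)
        = Real.log (N:ℝ) - Real.log 3 / Real.log 4 * Real.log (N:ℝ) := by
      rw [hβc]; ring
    linarith
  refine ⟨?_, ?_, ?_⟩
  · rw [hx1]
    have h2 : Real.log (N:ℝ) - Real.log 3 ≤ -Real.log ((ε*(N:ℝ) + 2*(1-ε))/(N:ℝ)) := by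
      linarith
    have h3 : σ*ε/β * (β * c * Real.log (N:ℝ)) ≤
        σ*ε/β * (-Real.log ((ε*(N:ℝ) + 2*(1-ε))/(N:ℝ))) := by
      apply mul_le_mul_of_nonneg_left (by linarith) (by positivity)
    calc c * σ * ε * Real.log (N:ℝ) = σ*ε/β * (β * c * Real.log (N:ℝ)) := by
          field_simp
      _ ≤ _ := h3
  · rw [hx2, hlogε]
  · rw [hx2, habs]
    have hc1β : c ≤ 1/β := (le_div_iff₀ hβ).mpr hcβ1
    have h6 : c * σ * ε ≤ σ*ε/β := by
      have h7 := mul_le_mul_of_nonneg_right hc1β (mul_nonneg hσ.le hε.le)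
      calc c*σ*ε = c*(σ*ε) := by ring
        _ ≤ 1/β*(σ*ε) := h7
        _ = σ*ε/β := by ring
    exact mul_le_mul_of_nonneg_right h6 hnlε

/-- For the Bakhvalov-type mesh, `x_{N/2-1} ≥ c·σε·ln N` and
`x_{N/2} = (σε/β)·ln(1/ε) ≥ c·σε·|ln ε|` for a constant `c > 0`
independent of `ε` and `N`. -/
theorem stmt5 (σ β : ℝ) (hσ : 0 < σ) (hβ : 0 < β) :
    ∃ c : ℝ, 0 < c ∧
      ∀ (N : ℕ) (ε : ℝ) (x : ℕ → ℝ), 4 ≤ N → Even N → 0 < ε → ε ≤ 1/(N:ℝ) →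
        (∀ i ≤ N/2, x i = σ*ε/β * (-Real.log (1 - 2*(1-ε)*((i:ℝ)/(N:ℝ))))) →
        c * σ * ε * Real.log N ≤ x (N/2 - 1) ∧
        x (N/2) = σ*ε/β * Real.log (1/ε) ∧
        c * σ * ε * |Real.log ε| ≤ x (N/2) := by
  have hL4 : (0:ℝ) < Real.log 4 := Real.log_pos (by norm_num)
  have hL3 : (0:ℝ) < Real.log 3 := Real.log_pos (by norm_num)
  have hL34 : Real.log 3 < Real.log 4 := Real.log_lt_log (by norm_num) (by norm_num)
  refine ⟨(Real.log 4 - Real.log 3) / (β * Real.log 4),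
    div_pos (by linarith) (by positivity),
    stmt5_aux σ β _ hσ hβ (div_pos (by linarith) (by positivity)) ?_⟩
  field_simp
end

section
/- On the Bakhvalov-type mesh, for every 0 ≤ i ≤ N/2 - 2 and every real μ with 0 ≤ μ ≤ σ, the quantity h_i^μ · e^{-β x_i/ε} is bounded by C·ε^μ·N^{-μ} with C independent of ε, N, and i. -/
set_option maxHeartbeats 1000000 in
/-- On the Bakhvalov-type mesh, for every `0 ≤ i ≤ N/2 - 2` and real `0 ≤ μ ≤ σ`,
`h_i^μ · e^{-β x_i/ε} ≤ C·ε^μ·N^{-μ}` with `C` independent of `ε`, `N` and `i`. -/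
theorem stmt6 (σ β : ℝ) (hσ : 0 < σ) (hβ : 0 < β) :
    ∃ C : ℝ, 0 < C ∧
      ∀ (N : ℕ) (ε : ℝ) (x h : ℕ → ℝ), 4 ≤ N → Even N → 0 < ε → ε ≤ 1/(N:ℝ) →
        (∀ i ≤ N/2, x i = σ*ε/β * (-Real.log (1 - 2*(1-ε)*((i:ℝ)/(N:ℝ))))) →
        (∀ i, h i = x (i+1) - x i) →
        ∀ (i : ℕ) (μ : ℝ), i ≤ N/2 - 2 → 0 ≤ μ → μ ≤ σ →
          (h i) ^ μ * Real.exp (-β * x i / ε) ≤ C * ε ^ μ * (N:ℝ) ^ (-μ) := by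
  set K : ℝ := max (4*σ/β) 1 with hK
  have hK1 : (1:ℝ) ≤ K := le_max_right _ _
  have hK0 : (0:ℝ) < K := lt_of_lt_of_le one_pos hK1
  have hKle : 4*σ/β ≤ K := le_max_left _ _
  clear_value K
  refine ⟨K ^ σ, Real.rpow_pos_of_pos hK0 σ, ?_⟩
  intro N ε x h hN4 hNeven hε hεN hx hh i μ hi hμ0 hμσ
  set n : ℝ := (N:ℝ) with hn
  have hn4 : (4:ℝ) ≤ n := by rw [hn]; exact_mod_cast hN4
  have hn0 : (0:ℝ) < n := by linarith
  clear_value n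
  have hε4 : ε ≤ 1/4 := hεN.trans (by
    rw [div_le_div_iff₀ hn0 (by norm_num)]; linarith)
  have hi2 : 2*i + 4 ≤ N := by omega
  have hic : 2*(i:ℝ) + 4 ≤ n := by rw [hn]; exact_mod_cast hi2
  have hi0 : (0:ℝ) ≤ (i:ℝ) := Nat.cast_nonneg i
  have hxi := hx i (by omega)
  have hxj := hx (i+1) (by omega)
  set s : ℝ := 1 - 2*(1-ε)*((i:ℝ)/n) with hs
  set s' : ℝ := 1 - 2*(1-ε)*(((i:ℝ)+1)/n) with hs'
  have hxj' : x (i+1) = σ*ε/β * (-Real.log s') := by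
    rw [hxj, hs']; push_cast; ring_nf
  -- basic bounds
  have he1 : (1/2:ℝ) ≤ 1 - ε := by linarith
  have he2 : 1 - ε ≤ 1 := by linarith
  have hsgap : s = s' + 2*(1-ε)/n := by
    rw [hs, hs']; field_simp; ring
  have hs'lb : 2*(1-ε)/n ≤ s' := by
    rw [hs', div_le_iff₀ hn0]
    have hcancel : ((i:ℝ)+1)/n * n = (i:ℝ)+1 := div_mul_cancel₀ _ hn0.ne'
    nlinarith [hcancel, mul_nonneg hε.le (show (0:ℝ) ≤ (i:ℝ)+2 by linarith)]
  have ha0 : (0:ℝ) < 2*(1-ε)/n := by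
    apply div_pos (by linarith) hn0
  have hs'0 : (0:ℝ) < s' := lt_of_lt_of_le ha0 hs'lb
  have hs0 : (0:ℝ) < s := by rw [hsgap]; linarith
  have hss' : s' ≤ s := by rw [hsgap]; linarith
  have hs2 : s ≤ 2*s' := by rw [hsgap]; linarith
  have hs1 : s ≤ 1 := by
    have : 0 ≤ 2*(1-ε)*((i:ℝ)/n) :=
      mul_nonneg (by linarith) (div_nonneg hi0 hn0.le)
    rw [hs]; linarith
  clear_value s s'
  -- the exponential term equals s ^ σ
  have hexp : Real.exp (-β * x i / ε) = s ^ σ := by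
    rw [hxi, Real.rpow_def_of_pos hs0]
    congr 1
    field_simp
  -- formula and bounds for h i
  have hhi : h i = σ*ε/β * (Real.log s - Real.log s') := by
    rw [hh i, hxj', hxi]; ring
  have hcoef : (0:ℝ) < σ*ε/β := by positivity
  have hlog0 : 0 ≤ Real.log s - Real.log s' :=
    sub_nonneg.2 (Real.log_le_log hs'0 hss')
  have hh0 : 0 ≤ h i := by
    rw [hhi]; exact mul_nonneg hcoef.le hlog0
  have hlogle : Real.log s - Real.log s' ≤ (2*(1-ε)/n) / s' := by
    rw [← Real.log_div hs0.ne' hs'0.ne']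
    have h1 : s / s' = 1 + (2*(1-ε)/n) / s' := by
      rw [hsgap, add_div, div_self hs'0.ne']
    have h2 := Real.log_le_sub_one_of_pos (show (0:ℝ) < s / s' from div_pos hs0 hs'0)
    rw [h1] at h2 ⊢
    linarith
  have hhle : h i ≤ (2*σ*ε/β) / (n * s') := by
    rw [hhi]
    calc σ*ε/β * (Real.log s - Real.log s') ≤ σ*ε/β * ((2*(1-ε)/n) / s') :=
          mul_le_mul_of_nonneg_left hlogle hcoef.le
      _ ≤ (2*σ*ε/β) / (n * s') := by
          have e1 : σ*ε/β * ((2*(1-ε)/n)/s') = (2*(1-ε))*(σ*ε) / (β*(n*s')) := by ring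
          have e2 : (2*σ*ε/β)/(n*s') = 2*(σ*ε) / (β*(n*s')) := by ring
          rw [e1, e2]
          refine div_le_div_of_nonneg_right ?_ (by positivity)
          nlinarith [mul_nonneg (mul_pos hσ hε).le hε.le]
  -- main chain
  have hb0 : (0:ℝ) ≤ (2*σ*ε/β)/(n*s') := by positivity
  have h1 : h i ^ μ ≤ ((2*σ*ε/β)/(n*s')) ^ μ := Real.rpow_le_rpow hh0 hhle hμ0
  have h2 : s ^ σ ≤ s ^ μ := Real.rpow_le_rpow_of_exponent_ge hs0 hs1 hμσ
  have h3 : s ^ μ ≤ (2*s') ^ μ := Real.rpow_le_rpow hs0.le hs2 hμ0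
  have h4 : h i ^ μ * Real.exp (-β * x i / ε) ≤ ((2*σ*ε/β)/(n*s'))^μ * (2*s')^μ := by
    rw [hexp]
    exact mul_le_mul h1 (h2.trans h3) (Real.rpow_nonneg hs0.le σ)
      (Real.rpow_nonneg hb0 μ)
  have h5 : ((2*σ*ε/β)/(n*s'))^μ * (2*s')^μ = ((4*σ/β) * ε * n⁻¹)^μ := by
    rw [← Real.mul_rpow hb0 (by positivity)]
    congr 1
    field_simp
    ring
  have h6 : ((4*σ/β) * ε * n⁻¹)^μ = (4*σ/β)^μ * ε^μ * (n⁻¹)^μ := by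
    rw [Real.mul_rpow (by positivity) (by positivity),
        Real.mul_rpow (by positivity) hε.le]
  have h7 : (n⁻¹ : ℝ)^μ = n ^ (-μ) := by
    rw [Real.inv_rpow hn0.le, ← Real.rpow_neg hn0.le]
  have h8 : (4*σ/β)^μ ≤ K ^ σ :=
    le_trans (Real.rpow_le_rpow (by positivity) hKle hμ0)
             (Real.rpow_le_rpow_of_exponent_le hK1 hμσ)
  calc h i ^ μ * Real.exp (-β * x i / ε)
      ≤ (4*σ/β)^μ * ε^μ * n ^ (-μ) := by rw [← h7, ← h6, ← h5]; exact h4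
    _ ≤ K ^ σ * ε^μ * n ^ (-μ) := by
        have hnn : (0:ℝ) ≤ ε^μ * n^(-μ) :=
          mul_nonneg (Real.rpow_nonneg hε.le μ) (Real.rpow_nonneg hn0.le _)
        nlinarith [mul_le_mul_of_nonneg_right h8 hnn]
end

section
/- For ε ≤ N^{-1}, the Bakhvalov transition step satisfies h_{N/2-1,x} = (σε/β)·ln((εN + 2(1-ε))/(εN)) ≤ (σ/β)·N^{-1}·sup_{0<s≤1}[s·ln((s+2)/s)]-type bound, and in particular h_{N/2-1,x} ≤ C·N^{-1} with C = 2σ/β, using the inequality t·ln(1 + a/t) ≤ a for all t, a > 0. -/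
lemma tlog_le (t a : ℝ) (ht : 0 < t) (ha : 0 < a) :
    t * Real.log (1 + a/t) ≤ a := by
  have h1 : Real.log (1 + a/t) ≤ a/t := by
    have := Real.log_le_sub_one_of_pos (x := 1 + a/t) (by positivity)
    linarith
  calc t * Real.log (1 + a/t) ≤ t * (a/t) := by
        exact mul_le_mul_of_nonneg_left h1 ht.le
    _ = a := by field_simp

/-- The Bakhvalov transition step
`h_{N/2-1,x} = x_{N/2} - x_{N/2-1}` equals `(σε/β)·ln((εN + 2(1-ε))/(εN))` and
is at most `(2σ/β)·N^{-1}`, using the elementary inequality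
`t·ln(1 + a/t) ≤ a` for all `t, a > 0`. -/
theorem stmt17 (N : ℕ) (hN : 4 ≤ N) (hNe : Even N) (ε σ β : ℝ)
    (hε0 : 0 < ε) (hε : ε ≤ 1/(N:ℝ)) (hσ : 0 < σ) (hβ : 0 < β)
    (xh xhm : ℝ)
    (hxh : xh = σ*ε/β * Real.log (1/ε))
    (hxhm : xhm = σ*ε/β * Real.log ((N:ℝ)/(ε*(N:ℝ) + 2*(1-ε)))) :
    xh - xhm = σ*ε/β * Real.log ((ε*(N:ℝ) + 2*(1-ε))/(ε*(N:ℝ))) ∧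
    xh - xhm ≤ (2*σ/β) * (1/(N:ℝ)) ∧
    (∀ t a : ℝ, 0 < t → 0 < a → t * Real.log (1 + a/t) ≤ a) := by
  have hN0 : (0:ℝ) < (N:ℝ) := by positivity
  have hε1 : ε < 1 := by
    have : (1:ℝ)/(N:ℝ) ≤ 1/4 := by
      apply div_le_div_of_nonneg_left (by norm_num) (by norm_num)
      exact_mod_cast hN
    linarith
  have hD : (0:ℝ) < ε*(N:ℝ) + 2*(1-ε) := by nlinarith
  have heN : (0:ℝ) < ε*(N:ℝ) := by positivity
  have heq : xh - xhm = σ*ε/β * Real.log ((ε*(N:ℝ) + 2*(1-ε))/(ε*(N:ℝ))) := by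
    rw [hxh, hxhm, ← mul_sub]
    congr 1
    rw [Real.log_div (by norm_num) (ne_of_gt hε0),
        Real.log_div (ne_of_gt hN0) (ne_of_gt hD),
        Real.log_div (ne_of_gt hD) (ne_of_gt heN),
        Real.log_mul (ne_of_gt hε0) (ne_of_gt hN0), Real.log_one]
    ring
  refine ⟨heq, ?_, fun t a ht ha => tlog_le t a ht ha⟩
  set L := Real.log ((ε*(N:ℝ) + 2*(1-ε))/(ε*(N:ℝ))) with hL
  have harg : (ε*(N:ℝ) + 2*(1-ε))/(ε*(N:ℝ)) = 1 + (2*(1-ε))/(ε*(N:ℝ)) := by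
    field_simp
  have key : ε*(N:ℝ) * L ≤ 2*(1-ε) := by
    rw [hL, harg]
    exact tlog_le (ε*(N:ℝ)) (2*(1-ε)) heN (by linarith)
  rw [heq]
  have h3 : σ/β * (ε*(N:ℝ)*L) ≤ σ/β * 2 := by
    apply mul_le_mul_of_nonneg_left _ (by positivity)
    nlinarith
  calc σ*ε/β*L = (σ/β*(ε*(N:ℝ)*L))/(N:ℝ) := by field_simp
    _ ≤ (σ/β*2)/(N:ℝ) := by gcongr
    _ = 2*σ/β*(1/(N:ℝ)) := by ring
end
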